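/- Let N ≥ 4 be a natural number and let θ : Fin N → ℝ be arbitrary. Then there exist pairwise distinct indices i, j, l in Fin N such that cos(2(θ_i − θ_j)) + cos(2(θ_j − θ_l)) + cos(2(θ_i − θ_l)) ≥ 1 + 2·cos(4π/N). -/

import Mathlib

open Real

lemma aux_trig {a b : ℝ} (ha : 0 ≤ a) (hb : 0 ≤ b) (hab : a + b ≤ π) :
    1 + Real.cos (a + b) ≤ Real.cos a + Real.cos b := by
  have h1 : Real.cos a + Real.cos b = 2 * Real.cos ((a+b)/2) * Real.cos ((a-b)/2) :=
    Real.cos_add_cos a b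
  have h2 : Real.cos ((a+b)/2) ^ 2 = 1/2 + Real.cos (a+b) / 2 := by
    have := Real.cos_sq ((a+b)/2)
    rw [show 2 * ((a+b)/2) = a + b by ring] at this
    linarith
  have hs1 : (a+b)/2 ≤ π/2 := by linarith
  have hcs : 0 ≤ Real.cos ((a+b)/2) := Real.cos_nonneg_of_mem_Icc ⟨by linarith, hs1⟩
  have hd : Real.cos ((a+b)/2) ≤ Real.cos ((a-b)/2) := by
    rcases le_total a b with h | h
    · rw [show (a-b)/2 = -((b-a)/2) by ring, Real.cos_neg]
      exact Real.cos_le_cos_of_nonneg_of_le_pi (by linarith) (by linarith [Real.pi_pos])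
        (by linarith)
    · exact Real.cos_le_cos_of_nonneg_of_le_pi (by linarith) (by linarith [Real.pi_pos])
        (by linarith)
  nlinarith

lemma aux_mod {N a b : ℕ} (h : a < b) (h2 : b - a < N) (he : a % N = b % N) : False := by
  have hd : N ∣ b - a := (Nat.modEq_iff_dvd' h.le).mp he
  have := Nat.le_of_dvd (by omega) hd
  omega

lemma aux_step {N : ℕ} (hNpos : 0 < N) (k : ℕ) :
    ((k+1) % N = k % N + 1 ∧ (k+1)/N = k/N) ∨
    ((k+1) % N = 0 ∧ (k+1)/N = k/N + 1) := by
  have hdm := Nat.div_add_mod k N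
  have hlt := Nat.mod_lt k hNpos
  rcases Nat.lt_or_ge (k % N + 1) N with h | h
  · left
    have hk1 : k + 1 = N * (k / N) + (k % N + 1) := by omega
    constructor
    · rw [hk1, Nat.mul_add_mod, Nat.mod_eq_of_lt h]
    · rw [hk1, Nat.mul_add_div hNpos, Nat.div_eq_of_lt h, Nat.add_zero]
  · right
    have hk1 : k + 1 = N * (k / N + 1) := by
      have : N * (k / N + 1) = N * (k / N) + N := by ring
      omega
    constructor
    · rw [hk1, Nat.mul_mod_right]
    · rw [hk1, Nat.mul_div_cancel_left _ hNpos]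

theorem stmt_7 (N : ℕ) (hN : 4 ≤ N) (θ : Fin N → ℝ) :
    ∃ i j l : Fin N, i ≠ j ∧ i ≠ l ∧ j ≠ l ∧
      Real.cos (2 * (θ i - θ j)) + Real.cos (2 * (θ j - θ l)) +
        Real.cos (2 * (θ i - θ l)) ≥ 1 + 2 * Real.cos (4 * Real.pi / N) := by
  have hNpos : 0 < N := by omega
  set ψ : Fin N → ℝ := fun i => toIcoMod Real.two_pi_pos 0 (2 * θ i) with hψdef
  have hψmem : ∀ i, ψ i ∈ Set.Ico (0:ℝ) (2*π) := by
    intro i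
    simpa using toIcoMod_mem_Ico Real.two_pi_pos 0 (2 * θ i)
  have hcosψ : ∀ p q : Fin N,
      Real.cos (2 * (θ p - θ q)) = Real.cos (ψ p - ψ q) := by
    intro p q
    have hp : ψ p = 2 * θ p - (toIcoDiv Real.two_pi_pos 0 (2*θ p) : ℤ) * (2*π) := by
      simp only [hψdef, toIcoMod, zsmul_eq_mul]
    have hq : ψ q = 2 * θ q - (toIcoDiv Real.two_pi_pos 0 (2*θ q) : ℤ) * (2*π) := by
      simp only [hψdef, toIcoMod, zsmul_eq_mul]
    have : 2 * (θ p - θ q) = (ψ p - ψ q) +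
        ((toIcoDiv Real.two_pi_pos 0 (2*θ p) - toIcoDiv Real.two_pi_pos 0 (2*θ q) : ℤ) : ℝ)
          * (2*π) := by
      rw [hp, hq]; push_cast; ring
    rw [this, Real.cos_add_int_mul_two_pi]
  set σ := Tuple.sort ψ with hσdef
  have hmono : Monotone (ψ ∘ σ) := Tuple.monotone_sort ψ
  set F : ℕ → ℝ := fun n => 2*π*((n / N : ℕ) : ℝ) + ψ (σ ⟨n % N, Nat.mod_lt n hNpos⟩)
    with hFdef
  set G : ℕ → ℝ := fun k => F (k+1) - F k with hGdef
  -- nonnegativity of gaps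
  have hG0 : ∀ k, 0 ≤ G k := by
    intro k
    rcases aux_step hNpos k with ⟨h1, h2⟩ | ⟨h1, h2⟩
    · have hle : ψ (σ ⟨k % N, Nat.mod_lt k hNpos⟩) ≤
          ψ (σ ⟨(k+1) % N, Nat.mod_lt (k+1) hNpos⟩) := by
        apply hmono
        simp [Fin.mk_le_mk, h1]
      simp only [hGdef, hFdef, h2]
      linarith
    · have h0 : 0 ≤ ψ (σ ⟨(k+1) % N, Nat.mod_lt (k+1) hNpos⟩) :=
        (hψmem _).1
      have h2π : ψ (σ ⟨k % N, Nat.mod_lt k hNpos⟩) < 2*π := (hψmem _).2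
      simp only [hGdef, hFdef, h2]
      push_cast
      linarith
  -- total sum of gaps
  have hsum : ∑ k ∈ Finset.range N, G k = 2*π := by
    rw [hGdef]
    rw [Finset.sum_range_sub F N]
    have hFN : F N = 2*π + ψ (σ ⟨0 % N, Nat.mod_lt 0 hNpos⟩) := by
      have e1 : N / N = 1 := Nat.div_self hNpos
      have e2 : N % N = 0 := Nat.mod_self N
      have : (⟨N % N, Nat.mod_lt N hNpos⟩ : Fin N) = ⟨0 % N, Nat.mod_lt 0 hNpos⟩ := by
        ext; simp [e2]
      simp only [hFdef, e1, this]
      norm_num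
    have hF0 : F 0 = ψ (σ ⟨0 % N, Nat.mod_lt 0 hNpos⟩) := by
      simp [hFdef]
    rw [hFN, hF0]; ring
  -- G is periodic at N : G N = G 0
  have hGN : G N = G 0 := by
    have e1 : (N+1) / N = 1 := by
      rw [show N + 1 = 1 + N by ring, Nat.add_div_right 1 hNpos, Nat.div_eq_of_lt (by omega)]
    have e2 : (N+1) % N = 1 := by
      rw [show N + 1 = 1 + N by ring, Nat.add_mod_right, Nat.mod_eq_of_lt (by omega)]
    have e3 : N / N = 1 := Nat.div_self hNpos
    have e4 : N % N = 0 := Nat.mod_self N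
    have i1 : (⟨(N+1) % N, Nat.mod_lt (N+1) hNpos⟩ : Fin N) = ⟨1 % N, Nat.mod_lt 1 hNpos⟩ := by
      ext; simp [e2, Nat.mod_eq_of_lt (show 1 < N by omega)]
    have i2 : (⟨N % N, Nat.mod_lt N hNpos⟩ : Fin N) = ⟨0 % N, Nat.mod_lt 0 hNpos⟩ := by
      ext; simp [e4]
    simp only [hGdef, hFdef, e1, e3, i1, i2]
    have e5 : (1:ℕ) / N = 0 := Nat.div_eq_of_lt (by omega)
    have e6 : (0:ℕ) / N = 0 := Nat.div_eq_of_lt (by omega)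
    rw [e5, e6]
    push_cast
    ring
  -- sum of adjacent pair sums is 4π
  have hsum2 : ∑ k ∈ Finset.range N, (G k + G (k+1)) = 4*π := by
    rw [Finset.sum_add_distrib, hsum]
    have : ∑ k ∈ Finset.range N, G (k+1) = 2*π := by
      have h1 := Finset.sum_range_succ' G N
      have h2 := Finset.sum_range_succ G N
      rw [h2, hsum, hGN] at h1
      linarith
    rw [this]; ring
  -- pigeonhole
  obtain ⟨k0, hk0mem, hk0⟩ := Finset.exists_le_of_sum_le (f := fun k => G k + G (k+1))
    (g := fun _ => 4*π/N) (s := Finset.range N) ⟨0, Finset.mem_range.mpr hNpos⟩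
    (by
      rw [hsum2, Finset.sum_const, Finset.card_range, nsmul_eq_mul,
        mul_div_cancel₀ _ (by positivity : (N:ℝ) ≠ 0)])
  have hk0N : k0 < N := Finset.mem_range.mp hk0mem
  set a := G k0 with hadef
  set b := G (k0+1) with hbdef
  have ha : 0 ≤ a := hG0 k0
  have hb : 0 ≤ b := hG0 (k0+1)
  have hab : a + b ≤ 4*π/N := hk0
  have hπN : 4*π/N ≤ π := by
    rw [div_le_iff₀ (by positivity)]
    nlinarith [Real.pi_pos, show (4:ℝ) ≤ (N:ℝ) by exact_mod_cast hN]
  -- the three indices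
  refine ⟨σ ⟨k0 % N, Nat.mod_lt k0 hNpos⟩, σ ⟨(k0+1) % N, Nat.mod_lt (k0+1) hNpos⟩,
    σ ⟨(k0+2) % N, Nat.mod_lt (k0+2) hNpos⟩, ?_, ?_, ?_, ?_⟩
  · intro h
    exact aux_mod (show k0 < k0+1 by omega) (by omega)
      (congrArg Fin.val (σ.injective h))
  · intro h
    exact aux_mod (show k0 < k0+2 by omega) (by omega)
      (congrArg Fin.val (σ.injective h))
  · intro h
    exact aux_mod (show k0+1 < k0+2 by omega) (by omega)
      (congrArg Fin.val (σ.injective h))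
  -- main inequality
  have hψval : ∀ n : ℕ, ψ (σ ⟨n % N, Nat.mod_lt n hNpos⟩) = F n - 2*π*((n / N : ℕ) : ℝ) := by
    intro n; simp only [hFdef]; ring
  have e1 : Real.cos (2 * (θ (σ ⟨k0 % N, Nat.mod_lt k0 hNpos⟩) -
      θ (σ ⟨(k0+1) % N, Nat.mod_lt (k0+1) hNpos⟩))) = Real.cos a := by
    rw [hcosψ]
    have h : ψ (σ ⟨k0 % N, Nat.mod_lt k0 hNpos⟩) -
        ψ (σ ⟨(k0+1) % N, Nat.mod_lt (k0+1) hNpos⟩) =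
        -a + ((((k0+1)/N : ℕ) : ℤ) - (((k0/N : ℕ)) : ℤ) : ℤ) * (2*π) := by
      rw [hψval k0, hψval (k0+1), hadef]
      simp only [hGdef, Int.cast_sub, Int.cast_natCast]
      ring
    rw [h, Real.cos_add_int_mul_two_pi, Real.cos_neg]
  have e2 : Real.cos (2 * (θ (σ ⟨(k0+1) % N, Nat.mod_lt (k0+1) hNpos⟩) -
      θ (σ ⟨(k0+2) % N, Nat.mod_lt (k0+2) hNpos⟩))) = Real.cos b := by
    rw [hcosψ]
    have h : ψ (σ ⟨(k0+1) % N, Nat.mod_lt (k0+1) hNpos⟩) -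
        ψ (σ ⟨(k0+2) % N, Nat.mod_lt (k0+2) hNpos⟩) =
        -b + ((((k0+2)/N : ℕ) : ℤ) - ((((k0+1)/N : ℕ)) : ℤ) : ℤ) * (2*π) := by
      rw [hψval (k0+1), hψval (k0+2), hbdef]
      simp only [hGdef, Int.cast_sub, Int.cast_natCast]
      rw [show k0 + 1 + 1 = k0 + 2 by omega]
      ring
    rw [h, Real.cos_add_int_mul_two_pi, Real.cos_neg]
  have e3 : Real.cos (2 * (θ (σ ⟨k0 % N, Nat.mod_lt k0 hNpos⟩) -
      θ (σ ⟨(k0+2) % N, Nat.mod_lt (k0+2) hNpos⟩))) = Real.cos (a + b) := by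
    rw [hcosψ]
    have h : ψ (σ ⟨k0 % N, Nat.mod_lt k0 hNpos⟩) -
        ψ (σ ⟨(k0+2) % N, Nat.mod_lt (k0+2) hNpos⟩) =
        -(a+b) + ((((k0+2)/N : ℕ) : ℤ) - (((k0/N : ℕ)) : ℤ) : ℤ) * (2*π) := by
      rw [hψval k0, hψval (k0+2), hadef, hbdef]
      simp only [hGdef, Int.cast_sub, Int.cast_natCast]
      rw [show k0 + 1 + 1 = k0 + 2 by omega]
      ring
    rw [h, Real.cos_add_int_mul_two_pi, Real.cos_neg]
  rw [e1, e2, e3]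
  have key := aux_trig ha hb (le_trans hab hπN)
  have hmono2 : Real.cos (4*π/N) ≤ Real.cos (a+b) :=
    Real.cos_le_cos_of_nonneg_of_le_pi (by linarith) hπN hab
  have : (4:ℝ) * π / N = 4 * Real.pi / N := by norm_num
  linarith
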